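/- Let F be a Gaussian mixture density with k₁ components on ℝ^{d₁} and G a Gaussian mixture density with k₂ components on ℝ^{d₂}. Then H(x,y) = F(x) G(y) is a Gaussian mixture density with k₁k₂ components on ℝ^{d₁+d₂}, it is homoscedastic whenever F and G are homoscedastic, and its modal set satisfies Mode(H) = Mode(F) × Mode(G). In particular, if F has at least M₁ ≥ 1 isolated modes and G has at least M₂ ≥ 1 isolated modes, then H has at least M₁M₂ isolated modes. -/

import Mathlib

open scoped BigOperators RealInnerProductSpace
open Matrix

/-- The density of a (nondegenerate) Gaussian with mean `μ` and covariance matrix `S`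
on the Euclidean space indexed by `ι`. -/
noncomputable def gaussianPdf {ι : Type*} [Fintype ι] [DecidableEq ι]
    (μ : EuclideanSpace ℝ ι) (S : Matrix ι ι ℝ) (x : EuclideanSpace ℝ ι) : ℝ :=
  (2 * Real.pi) ^ (-(Fintype.card ι : ℝ) / 2) * S.det ^ (-(1 : ℝ) / 2) *
    Real.exp (-(1 / 2 : ℝ) * ((fun i => x i - μ i) ⬝ᵥ (S⁻¹ *ᵥ (fun i => x i - μ i))))

/-- A `k`-component Gaussian mixture density. -/
noncomputable def mixturePdf {ι : Type*} [Fintype ι] [DecidableEq ι] {k : ℕ}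
    (α : Fin k → ℝ) (μ : Fin k → EuclideanSpace ℝ ι) (S : Fin k → Matrix ι ι ℝ)
    (x : EuclideanSpace ℝ ι) : ℝ :=
  ∑ i, α i * gaussianPdf (μ i) (S i) x

/-- `Φ` is a Gaussian mixture density with weights `α`, means `μ`,
and (positive definite) covariance matrices `S`. -/
def IsGaussianMixture {ι : Type*} [Fintype ι] [DecidableEq ι] {k : ℕ}
    (Φ : EuclideanSpace ℝ ι → ℝ) (α : Fin k → ℝ) (μ : Fin k → EuclideanSpace ℝ ι)
    (S : Fin k → Matrix ι ι ℝ) : Prop :=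
  (∀ i, 0 < α i) ∧ (∑ i, α i) = 1 ∧ (∀ i, (S i).PosDef) ∧
    ∀ x, Φ x = mixturePdf α μ S x

/-- The Hessian matrix of `f : ℝ^ι → ℝ` at `x`. -/
noncomputable def hessianMatrix {ι : Type*} [Fintype ι] [DecidableEq ι]
    (f : EuclideanSpace ℝ ι → ℝ) (x : EuclideanSpace ℝ ι) : Matrix ι ι ℝ :=
  Matrix.of fun i j =>
    iteratedFDeriv ℝ 2 f x ![EuclideanSpace.single i 1, EuclideanSpace.single j 1]

/-- The set of isolated modes (isolated local maxima) of a function `f`. -/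
def isolatedModes {E : Type*} [TopologicalSpace E] (f : E → ℝ) : Set E :=
  {x | IsLocalMax f x ∧ ∃ U ∈ nhds x, {y | IsLocalMax f y} ∩ U = {x}}


lemma gaussianPdf_pos {ι : Type*} [Fintype ι] [DecidableEq ι]
    (μ : EuclideanSpace ℝ ι) {S : Matrix ι ι ℝ} (hS : S.PosDef)
    (x : EuclideanSpace ℝ ι) : 0 < gaussianPdf μ S x := by
  have h2π : (0:ℝ) < 2 * Real.pi := by positivity
  exact mul_pos (mul_pos (Real.rpow_pos_of_pos h2π _)
    (Real.rpow_pos_of_pos hS.det_pos _)) (Real.exp_pos _)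

lemma posDef_fromBlocks_diag {m n : Type*} [Fintype m] [Fintype n]
    {A : Matrix m m ℝ} {D : Matrix n n ℝ} (hA : A.PosDef) (hD : D.PosDef) :
    (Matrix.fromBlocks A 0 0 D).PosDef := by
  refine Matrix.PosDef.of_dotProduct_mulVec_pos ?_ (fun x hx => ?_)
  · exact Matrix.IsHermitian.fromBlocks hA.1 (by simp) hD.1
  · set a : m → ℝ := fun i => x (Sum.inl i) with ha
    set b : n → ℝ := fun j => x (Sum.inr j) with hb
    have hxe : x = Sum.elim a b := by funext s; cases s <;> rfl
    have hab : a ≠ 0 ∨ b ≠ 0 := by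
      by_contra h
      push_neg at h
      apply hx
      rw [hxe, h.1, h.2]
      funext s; cases s <;> rfl
    have h1 : (0:ℝ) ≤ a ⬝ᵥ (A *ᵥ a) := by simpa using hA.posSemidef.dotProduct_mulVec_nonneg a
    have h2 : (0:ℝ) ≤ b ⬝ᵥ (D *ᵥ b) := by simpa using hD.posSemidef.dotProduct_mulVec_nonneg b
    have hq : star x ⬝ᵥ ((Matrix.fromBlocks A 0 0 D) *ᵥ x)
        = a ⬝ᵥ (A *ᵥ a) + b ⬝ᵥ (D *ᵥ b) := by
      rw [hxe, Matrix.fromBlocks_mulVec]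
      simp [sumElim_dotProduct_sumElim]
    rw [hq]
    rcases hab with h | h
    · have := hA.dotProduct_mulVec_pos h
      simp only [star_trivial] at this
      exact add_pos_of_pos_of_nonneg this h2
    · have := hD.dotProduct_mulVec_pos h
      simp only [star_trivial] at this
      exact add_pos_of_nonneg_of_pos h1 this

lemma gaussianPdf_fromBlocks {d₁ d₂ : ℕ}
    (μa : EuclideanSpace ℝ (Fin d₁)) {Sa : Matrix (Fin d₁) (Fin d₁) ℝ} (hSa : Sa.PosDef)
    (μb : EuclideanSpace ℝ (Fin d₂)) {Sb : Matrix (Fin d₂) (Fin d₂) ℝ} (hSb : Sb.PosDef)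
    (z : EuclideanSpace ℝ (Fin d₁ ⊕ Fin d₂)) :
    gaussianPdf (WithLp.toLp 2 (Sum.elim μa μb) : EuclideanSpace ℝ (Fin d₁ ⊕ Fin d₂))
      (Matrix.fromBlocks Sa 0 0 Sb) z
    = gaussianPdf μa Sa (WithLp.toLp 2 (fun i => z (Sum.inl i))) * gaussianPdf μb Sb (WithLp.toLp 2 (fun j => z (Sum.inr j))) := by
  have h2π : (0:ℝ) < 2 * Real.pi := by positivity
  have hc : (2 * Real.pi) ^ (-(Fintype.card (Fin d₁ ⊕ Fin d₂) : ℝ) / 2)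
      = (2 * Real.pi) ^ (-(Fintype.card (Fin d₁) : ℝ) / 2) *
        (2 * Real.pi) ^ (-(Fintype.card (Fin d₂) : ℝ) / 2) := by
    rw [← Real.rpow_add h2π]
    congr 1
    simp [Fintype.card_sum]
    ring
  have hdet : ((Matrix.fromBlocks Sa (0 : Matrix (Fin d₁) (Fin d₂) ℝ) 0 Sb).det) ^ (-(1:ℝ)/2)
      = Sa.det ^ (-(1:ℝ)/2) * Sb.det ^ (-(1:ℝ)/2) := by
    rw [Matrix.det_fromBlocks_zero₂₁, Real.mul_rpow hSa.det_pos.le hSb.det_pos.le]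
  have hinv : (Matrix.fromBlocks Sa (0 : Matrix (Fin d₁) (Fin d₂) ℝ) 0 Sb)⁻¹
      = Matrix.fromBlocks Sa⁻¹ 0 0 Sb⁻¹ := by
    rw [Matrix.inv_fromBlocks_zero₂₁_of_isUnit_iff Sa 0 Sb
      (by simp [hSa.isUnit, hSb.isUnit])]
    simp
  set va : Fin d₁ → ℝ := fun i => z (Sum.inl i) - μa i with hva
  set vb : Fin d₂ → ℝ := fun j => z (Sum.inr j) - μb j with hvb
  have hv : (fun s => z s - Sum.elim μa μb s) = Sum.elim va vb := by
    funext s; cases s <;> rfl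
  have hquad : (fun s => z s - (WithLp.toLp 2 (Sum.elim μa μb) : EuclideanSpace ℝ (Fin d₁ ⊕ Fin d₂)) s) ⬝ᵥ
        ((Matrix.fromBlocks Sa (0 : Matrix (Fin d₁) (Fin d₂) ℝ) 0 Sb)⁻¹ *ᵥ
          (fun s => z s - (WithLp.toLp 2 (Sum.elim μa μb) : EuclideanSpace ℝ (Fin d₁ ⊕ Fin d₂)) s))
      = va ⬝ᵥ (Sa⁻¹ *ᵥ va) + vb ⬝ᵥ (Sb⁻¹ *ᵥ vb) := by
    rw [show (fun s => z s - (WithLp.toLp 2 (Sum.elim μa μb) : EuclideanSpace ℝ (Fin d₁ ⊕ Fin d₂)) s)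
        = Sum.elim va vb from hv, hinv, Matrix.fromBlocks_mulVec]
    simp [sumElim_dotProduct_sumElim]
  unfold gaussianPdf
  rw [hc, hdet, hquad, mul_add, Real.exp_add]
  ring

lemma mixture_pos {ι : Type*} [Fintype ι] [DecidableEq ι] {k : ℕ}
    {Φ : EuclideanSpace ℝ ι → ℝ} {α : Fin k → ℝ} {μ : Fin k → EuclideanSpace ℝ ι}
    {S : Fin k → Matrix ι ι ℝ} (h : IsGaussianMixture Φ α μ S) (x : EuclideanSpace ℝ ι) :
    0 < Φ x := by
  obtain ⟨hα, hsum, hS, hΦ⟩ := h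
  rw [hΦ]
  have hne : (Finset.univ : Finset (Fin k)).Nonempty := by
    rcases Nat.eq_zero_or_pos k with h0 | h0
    · exfalso; subst h0; simp at hsum
    · exact ⟨⟨0, h0⟩, Finset.mem_univ _⟩
  exact Finset.sum_pos (fun i _ => mul_pos (hα i) (gaussianPdf_pos _ (hS i) x)) hne

lemma continuous_projL {d₁ d₂ : ℕ} :
    Continuous (fun z : EuclideanSpace ℝ (Fin d₁ ⊕ Fin d₂) =>
      (WithLp.toLp 2 (fun i => z (Sum.inl i)) : EuclideanSpace ℝ (Fin d₁))) := by
  exact (PiLp.continuous_toLp 2 (fun _ : Fin d₁ => ℝ)).comp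
      ((continuous_pi fun i => (continuous_apply (Sum.inl i))).comp
        (PiLp.continuous_ofLp 2 (fun _ : Fin d₁ ⊕ Fin d₂ => ℝ)))

lemma continuous_projR {d₁ d₂ : ℕ} :
    Continuous (fun z : EuclideanSpace ℝ (Fin d₁ ⊕ Fin d₂) =>
      (WithLp.toLp 2 (fun j => z (Sum.inr j)) : EuclideanSpace ℝ (Fin d₂))) := by
  exact (PiLp.continuous_toLp 2 (fun _ : Fin d₂ => ℝ)).comp
      ((continuous_pi fun j => (continuous_apply (Sum.inr j))).comp
        (PiLp.continuous_ofLp 2 (fun _ : Fin d₁ ⊕ Fin d₂ => ℝ)))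

lemma continuous_embL {d₁ d₂ : ℕ} (y : EuclideanSpace ℝ (Fin d₂)) :
    Continuous (fun x : EuclideanSpace ℝ (Fin d₁) =>
      (WithLp.toLp 2 (Sum.elim x y) : EuclideanSpace ℝ (Fin d₁ ⊕ Fin d₂))) := by
  have mid : Continuous (fun f : Fin d₁ → ℝ => (Sum.elim f y : (Fin d₁ ⊕ Fin d₂) → ℝ)) := by
    refine continuous_pi fun s => ?_
    cases s with
    | inl i => exact continuous_apply i
    | inr j => exact continuous_const
  exact (PiLp.continuous_toLp 2 (fun _ : Fin d₁ ⊕ Fin d₂ => ℝ)).comp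
      (mid.comp (PiLp.continuous_ofLp 2 (fun _ : Fin d₁ => ℝ)))

lemma continuous_embR {d₁ d₂ : ℕ} (x : EuclideanSpace ℝ (Fin d₁)) :
    Continuous (fun y : EuclideanSpace ℝ (Fin d₂) =>
      (WithLp.toLp 2 (Sum.elim x y) : EuclideanSpace ℝ (Fin d₁ ⊕ Fin d₂))) := by
  have mid : Continuous (fun f : Fin d₂ → ℝ => (Sum.elim x f : (Fin d₁ ⊕ Fin d₂) → ℝ)) := by
    refine continuous_pi fun s => ?_
    cases s with
    | inl i => exact continuous_const
    | inr j => exact continuous_apply j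
  exact (PiLp.continuous_toLp 2 (fun _ : Fin d₁ ⊕ Fin d₂ => ℝ)).comp
      (mid.comp (PiLp.continuous_ofLp 2 (fun _ : Fin d₂ => ℝ)))

/-- Proposition: Cartesian products of Gaussian mixtures.
If $F$ is a $k_1$-component Gaussian mixture on $ℝ^{d_1}$ and $G$ a $k_2$-component
Gaussian mixture on $ℝ^{d_2}$, then $H(x,y)=F(x)G(y)$ is a $k_1k_2$-component Gaussian
mixture on $ℝ^{d_1+d_2} ≅ ℝ^{d_1} × ℝ^{d_2}$, homoscedastic whenever $F$ and $G$ are,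
with $\mathrm{Mode}(H)=\mathrm{Mode}(F)×\mathrm{Mode}(G)$; and at least $M_1M_2$ isolated
modes when $F$ and $G$ have at least $M_1$ and $M_2$ isolated modes respectively. -/
theorem cartesian_product_modes
    {d₁ d₂ k₁ k₂ : ℕ}
    (α₁ : Fin k₁ → ℝ) (μ₁ : Fin k₁ → EuclideanSpace ℝ (Fin d₁))
    (S₁ : Fin k₁ → Matrix (Fin d₁) (Fin d₁) ℝ)
    (F : EuclideanSpace ℝ (Fin d₁) → ℝ) (hF : IsGaussianMixture F α₁ μ₁ S₁)
    (α₂ : Fin k₂ → ℝ) (μ₂ : Fin k₂ → EuclideanSpace ℝ (Fin d₂))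
    (S₂ : Fin k₂ → Matrix (Fin d₂) (Fin d₂) ℝ)
    (G : EuclideanSpace ℝ (Fin d₂) → ℝ) (hG : IsGaussianMixture G α₂ μ₂ S₂)
    (H : EuclideanSpace ℝ (Fin d₁ ⊕ Fin d₂) → ℝ)
    (hH : ∀ z, H z = F (WithLp.toLp 2 (fun i => z (Sum.inl i))) * G (WithLp.toLp 2 (fun j => z (Sum.inr j)))) :
    (∃ (α' : Fin (k₁ * k₂) → ℝ) (μ' : Fin (k₁ * k₂) → EuclideanSpace ℝ (Fin d₁ ⊕ Fin d₂))
        (S' : Fin (k₁ * k₂) → Matrix (Fin d₁ ⊕ Fin d₂) (Fin d₁ ⊕ Fin d₂) ℝ),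
      IsGaussianMixture H α' μ' S' ∧
      ((∀ i j, S₁ i = S₁ j) → (∀ i j, S₂ i = S₂ j) → ∀ i j, S' i = S' j)) ∧
    {z : EuclideanSpace ℝ (Fin d₁ ⊕ Fin d₂) | IsLocalMax H z} =
      {z : EuclideanSpace ℝ (Fin d₁ ⊕ Fin d₂) |
        IsLocalMax F (WithLp.toLp 2 (fun i => z (Sum.inl i))) ∧ IsLocalMax G (WithLp.toLp 2 (fun j => z (Sum.inr j)))} ∧
    ∀ M₁ M₂ : ℕ, 1 ≤ M₁ → 1 ≤ M₂ →
      (∃ T₁ : Finset (EuclideanSpace ℝ (Fin d₁)), ↑T₁ ⊆ isolatedModes F ∧ M₁ ≤ T₁.card) →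
      (∃ T₂ : Finset (EuclideanSpace ℝ (Fin d₂)), ↑T₂ ⊆ isolatedModes G ∧ M₂ ≤ T₂.card) →
      ∃ T : Finset (EuclideanSpace ℝ (Fin d₁ ⊕ Fin d₂)),
        ↑T ⊆ isolatedModes H ∧ M₁ * M₂ ≤ T.card := by
  classical
  have Fpos : ∀ x, 0 < F x := mixture_pos hF
  have Gpos : ∀ y, 0 < G y := mixture_pos hG
  obtain ⟨hα₁, hsum₁, hSd₁, hFeq⟩ := hF
  obtain ⟨hα₂, hsum₂, hSd₂, hGeq⟩ := hG
  -- Mode set equality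
  have hModes : {z : EuclideanSpace ℝ (Fin d₁ ⊕ Fin d₂) | IsLocalMax H z} =
      {z : EuclideanSpace ℝ (Fin d₁ ⊕ Fin d₂) |
        IsLocalMax F (WithLp.toLp 2 (fun i => z (Sum.inl i))) ∧ IsLocalMax G (WithLp.toLp 2 (fun j => z (Sum.inr j)))} := by
    ext z
    simp only [Set.mem_setOf_eq]
    constructor
    · intro hz
      have hzx : (WithLp.toLp 2 (Sum.elim (WithLp.toLp 2 (fun i => z (Sum.inl i)) : EuclideanSpace ℝ (Fin d₁)) (WithLp.toLp 2 (fun j => z (Sum.inr j)) : EuclideanSpace ℝ (Fin d₂))) :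
          EuclideanSpace ℝ (Fin d₁ ⊕ Fin d₂)) = z := by
        ext s; cases s <;> rfl
      constructor
      · have ht : Filter.Tendsto (fun x : EuclideanSpace ℝ (Fin d₁) =>
            (WithLp.toLp 2 (Sum.elim x (WithLp.toLp 2 (fun j => z (Sum.inr j)) : EuclideanSpace ℝ (Fin d₂))) : EuclideanSpace ℝ (Fin d₁ ⊕ Fin d₂)))
            (nhds (WithLp.toLp 2 (fun i => z (Sum.inl i)))) (nhds z) := by
          have := (continuous_embL (d₁ := d₁) (WithLp.toLp 2 (fun j => z (Sum.inr j)))).tendsto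
            (WithLp.toLp 2 (fun i => z (Sum.inl i)))
          rwa [hzx] at this
        refine (ht.eventually hz).mono fun x hx => ?_
        have h1 : H (WithLp.toLp 2 (Sum.elim x (WithLp.toLp 2 (fun j => z (Sum.inr j)) : EuclideanSpace ℝ (Fin d₂))) :
            EuclideanSpace ℝ (Fin d₁ ⊕ Fin d₂))
            = F x * G (WithLp.toLp 2 (fun j => z (Sum.inr j))) := by rw [hH]; rfl
        rw [h1, hH z] at hx
        exact le_of_mul_le_mul_right hx (Gpos _)
      · have ht : Filter.Tendsto (fun y : EuclideanSpace ℝ (Fin d₂) =>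
            (WithLp.toLp 2 (Sum.elim (WithLp.toLp 2 (fun i => z (Sum.inl i)) : EuclideanSpace ℝ (Fin d₁)) y) : EuclideanSpace ℝ (Fin d₁ ⊕ Fin d₂)))
            (nhds (WithLp.toLp 2 (fun j => z (Sum.inr j)))) (nhds z) := by
          have := (continuous_embR (d₂ := d₂) (WithLp.toLp 2 (fun i => z (Sum.inl i)))).tendsto
            (WithLp.toLp 2 (fun j => z (Sum.inr j)))
          rwa [hzx] at this
        refine (ht.eventually hz).mono fun y hy => ?_
        have h1 : H (WithLp.toLp 2 (Sum.elim (WithLp.toLp 2 (fun i => z (Sum.inl i)) : EuclideanSpace ℝ (Fin d₁)) y) :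
            EuclideanSpace ℝ (Fin d₁ ⊕ Fin d₂))
            = F (WithLp.toLp 2 (fun i => z (Sum.inl i))) * G y := by rw [hH]; rfl
        rw [h1, hH z] at hy
        exact le_of_mul_le_mul_left hy (Fpos _)
    · rintro ⟨hx, hy⟩
      have t1 := ((continuous_projL (d₁ := d₁) (d₂ := d₂)).tendsto z).eventually hx
      have t2 := ((continuous_projR (d₁ := d₁) (d₂ := d₂)).tendsto z).eventually hy
      refine (t1.and t2).mono fun w hw => ?_
      rw [hH w, hH z]
      exact mul_le_mul hw.1 hw.2 (Gpos _).le (Fpos _).le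
  refine ⟨?_, hModes, ?_⟩
  · -- mixture structure
    set e : Fin (k₁ * k₂) ≃ Fin k₁ × Fin k₂ := finProdFinEquiv.symm with he
    refine ⟨fun m => α₁ (e m).1 * α₂ (e m).2,
      fun m => (WithLp.toLp 2 (Sum.elim (μ₁ (e m).1) (μ₂ (e m).2)) : EuclideanSpace ℝ (Fin d₁ ⊕ Fin d₂)),
      fun m => Matrix.fromBlocks (S₁ (e m).1) 0 0 (S₂ (e m).2),
      ⟨fun m => mul_pos (hα₁ _) (hα₂ _), ?_, fun m => posDef_fromBlocks_diag (hSd₁ _) (hSd₂ _),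
        ?_⟩, ?_⟩
    · -- weights sum to 1
      have h1 : ∑ m, α₁ (e m).1 * α₂ (e m).2 = ∑ p : Fin k₁ × Fin k₂, α₁ p.1 * α₂ p.2 :=
        Fintype.sum_equiv e _ _ fun m => rfl
      rw [h1, Fintype.sum_prod_type, ← Fintype.sum_mul_sum, hsum₁, hsum₂, one_mul]
    · -- pointwise equality
      intro z
      have step1 : mixturePdf (fun m => α₁ (e m).1 * α₂ (e m).2)
          (fun m => (WithLp.toLp 2 (Sum.elim (μ₁ (e m).1) (μ₂ (e m).2)) :
            EuclideanSpace ℝ (Fin d₁ ⊕ Fin d₂)))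
          (fun m => Matrix.fromBlocks (S₁ (e m).1) 0 0 (S₂ (e m).2)) z
          = ∑ p : Fin k₁ × Fin k₂,
              (α₁ p.1 * gaussianPdf (μ₁ p.1) (S₁ p.1) (WithLp.toLp 2 (fun i => z (Sum.inl i)))) *
              (α₂ p.2 * gaussianPdf (μ₂ p.2) (S₂ p.2) (WithLp.toLp 2 (fun j => z (Sum.inr j)))) := by
        unfold mixturePdf
        refine Fintype.sum_equiv e _ _ fun m => ?_
        simp only
        rw [gaussianPdf_fromBlocks (μ₁ (e m).1) (hSd₁ _) (μ₂ (e m).2) (hSd₂ _) z]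
        ring
      rw [hH z, hFeq, hGeq, step1, Fintype.sum_prod_type]
      simp only
      rw [← Fintype.sum_mul_sum]
      rfl
    · -- homoscedastic
      intro h1 h2 i j
      show Matrix.fromBlocks (S₁ (e i).1) 0 0 (S₂ (e i).2)
          = Matrix.fromBlocks (S₁ (e j).1) 0 0 (S₂ (e j).2)
      rw [h1 (e i).1 (e j).1, h2 (e i).2 (e j).2]
  · -- isolated modes
    rintro M₁ M₂ _ _ ⟨T₁, hT₁, hc₁⟩ ⟨T₂, hT₂, hc₂⟩
    set emb : EuclideanSpace ℝ (Fin d₁) × EuclideanSpace ℝ (Fin d₂) →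
        EuclideanSpace ℝ (Fin d₁ ⊕ Fin d₂) :=
      fun p => (WithLp.toLp 2 (Sum.elim p.1 p.2) : EuclideanSpace ℝ (Fin d₁ ⊕ Fin d₂)) with hembdef
    have hinj : Function.Injective emb := by
      intro p q h
      have h1 : p.1 = q.1 := by ext i; exact congrFun (congrArg WithLp.ofLp h) (Sum.inl i)
      have h2 : p.2 = q.2 := by ext j; exact congrFun (congrArg WithLp.ofLp h) (Sum.inr j)
      exact Prod.ext h1 h2
    refine ⟨(T₁ ×ˢ T₂).image emb, ?_, ?_⟩
    · intro w hw
      simp only [Finset.coe_image, Set.mem_image, Finset.mem_coe, Finset.mem_product] at hw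
      obtain ⟨p, ⟨hp1, hp2⟩, rfl⟩ := hw
      obtain ⟨hxmax, U, hU, hUeq⟩ := hT₁ (Finset.mem_coe.mpr hp1)
      obtain ⟨hymax, V, hV, hVeq⟩ := hT₂ (Finset.mem_coe.mpr hp2)
      have hmem : emb p ∈ {z : EuclideanSpace ℝ (Fin d₁ ⊕ Fin d₂) | IsLocalMax H z} := by
        rw [hModes]
        exact ⟨hxmax, hymax⟩
      refine ⟨hmem, (fun z : EuclideanSpace ℝ (Fin d₁ ⊕ Fin d₂) =>
          (WithLp.toLp 2 (fun i => z (Sum.inl i)) : EuclideanSpace ℝ (Fin d₁))) ⁻¹' U ∩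
        (fun z : EuclideanSpace ℝ (Fin d₁ ⊕ Fin d₂) =>
          (WithLp.toLp 2 (fun j => z (Sum.inr j)) : EuclideanSpace ℝ (Fin d₂))) ⁻¹' V, ?_, ?_⟩
      · exact Filter.inter_mem
          (continuous_projL.continuousAt.preimage_mem_nhds hU)
          (continuous_projR.continuousAt.preimage_mem_nhds hV)
      · ext w
        simp only [Set.mem_inter_iff, Set.mem_setOf_eq, Set.mem_preimage,
          Set.mem_singleton_iff]
        constructor
        · rintro ⟨hwmax, hwU, hwV⟩
          have hw2 : IsLocalMax F (WithLp.toLp 2 (fun i => w (Sum.inl i))) ∧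
              IsLocalMax G (WithLp.toLp 2 (fun j => w (Sum.inr j))) := by
            have : w ∈ {z : EuclideanSpace ℝ (Fin d₁ ⊕ Fin d₂) | IsLocalMax H z} := hwmax
            rw [hModes] at this
            exact this
          have e1 : (WithLp.toLp 2 (fun i => w (Sum.inl i)) : EuclideanSpace ℝ (Fin d₁)) = p.1 := by
            have hm : (WithLp.toLp 2 (fun i => w (Sum.inl i)) : EuclideanSpace ℝ (Fin d₁)) ∈
                {y | IsLocalMax F y} ∩ U := ⟨hw2.1, hwU⟩
            rw [hUeq] at hm
            exact hm
          have e2 : (WithLp.toLp 2 (fun j => w (Sum.inr j)) : EuclideanSpace ℝ (Fin d₂)) = p.2 := by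
            have hm : (WithLp.toLp 2 (fun j => w (Sum.inr j)) : EuclideanSpace ℝ (Fin d₂)) ∈
                {y | IsLocalMax G y} ∩ V := ⟨hw2.2, hwV⟩
            rw [hVeq] at hm
            exact hm
          ext s
          cases s with
          | inl i => exact congrArg (fun v : EuclideanSpace ℝ (Fin d₁) => v i) e1
          | inr j => exact congrArg (fun v : EuclideanSpace ℝ (Fin d₂) => v j) e2
        · rintro rfl
          refine ⟨hmem, ?_, ?_⟩
          · have : p.1 ∈ {y | IsLocalMax F y} ∩ U := by rw [hUeq]; rfl
            exact this.2
          · have : p.2 ∈ {y | IsLocalMax G y} ∩ V := by rw [hVeq]; rfl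
            exact this.2
    · rw [Finset.card_image_of_injective _ hinj, Finset.card_product]
      exact Nat.mul_le_mul hc₁ hc₂
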